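/- Let (U,V) be a pair of nonnegative random variables such that P(U ≤ t) ≤ t for all t ∈ [0,1], and assume that for every r ≥ 0 the map u ↦ P(V < r | U ≤ u) is nondecreasing on {u : P(U ≤ u) > 0}. Then for every c > 0, E[ 1{U ≤ c·V} / V · 1{V > 0} ] ≤ c. -/

import Mathlib

open MeasureTheory

lemma tele_sum_le_one (β : ℤ → ℝ) (hmono : ∀ k, β (k + 1) ≤ β k)
    (h0 : ∀ k, 0 ≤ β k) (h1 : ∀ k, β k ≤ 1) :
    ∑' k : ℤ, ENNReal.ofReal (β k - β (k + 1)) ≤ 1 := by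
  have hanti : Antitone β := antitone_int_of_succ_le hmono
  rw [ENNReal.tsum_eq_iSup_sum]
  apply iSup_le
  intro s
  rcases s.eq_empty_or_nonempty with rfl | hne
  · simp
  set a := s.min' hne with ha
  set m := s.max' hne with hm
  have hsub : s ⊆ Finset.Icc a m := by
    intro k hk
    exact Finset.mem_Icc.2 ⟨s.min'_le k hk, s.le_max' k hk⟩
  have key : ∀ n : ℕ,
      ∑ k ∈ Finset.Icc a (a + n), ENNReal.ofReal (β k - β (k + 1))
        ≤ ENNReal.ofReal (β a - β (a + n + 1)) := by
    intro n
    induction n with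
    | zero => simp
    | succ n ih =>
      have hins : Finset.Icc a (a + (n + 1 : ℕ)) = insert (a + n + 1) (Finset.Icc a (a + n)) := by
        ext x; simp only [Finset.mem_Icc, Finset.mem_insert]; push_cast; omega
      have hnotmem : (a + n + 1) ∉ Finset.Icc a (a + n) := by
        simp only [Finset.mem_Icc]; omega
      rw [hins, Finset.sum_insert hnotmem]
      calc ENNReal.ofReal (β (a + n + 1) - β (a + n + 1 + 1))
            + ∑ k ∈ Finset.Icc a (a + n), ENNReal.ofReal (β k - β (k + 1))
          ≤ ENNReal.ofReal (β (a + n + 1) - β (a + n + 1 + 1))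
            + ENNReal.ofReal (β a - β (a + n + 1)) := by gcongr
        _ = ENNReal.ofReal (β a - β (a + n + 1 + 1)) := by
            rw [← ENNReal.ofReal_add (by linarith [hmono (a + n + 1)])
              (by linarith [hanti (show a ≤ a + n + 1 by omega)])]
            congr 1; push_cast; ring
        _ = ENNReal.ofReal (β a - β (a + (n + 1 : ℕ) + 1)) := by norm_num; ring_nf
  have ham : a ≤ m := s.min'_le m (s.max'_mem hne)
  have hkey := key (m - a).toNat
  rw [show a + ((m - a).toNat : ℤ) = m by omega] at hkey
  calc ∑ k ∈ s, ENNReal.ofReal (β k - β (k + 1))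
      ≤ ∑ k ∈ Finset.Icc a m, ENNReal.ofReal (β k - β (k + 1)) :=
        Finset.sum_le_sum_of_subset hsub
    _ ≤ ENNReal.ofReal (β a - β (m + 1)) := hkey
    _ ≤ ENNReal.ofReal 1 := by
        apply ENNReal.ofReal_le_ofReal; linarith [h1 a, h0 (m + 1)]
    _ = 1 := ENNReal.ofReal_one
open scoped ENNReal

lemma key_bound
    {Ω : Type*} [MeasurableSpace Ω] (P : Measure Ω) [IsProbabilityMeasure P]
    (U V : Ω → ℝ) (hU : Measurable U) (hV : Measurable V)
    (hUnif : ∀ t : ℝ, t ∈ Set.Icc (0:ℝ) 1 → P {ω | U ω ≤ t} ≤ ENNReal.ofReal t)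
    (hdep : ∀ r : ℝ, 0 ≤ r → ∀ u u' : ℝ, u ≤ u' → 0 < P {ω | U ω ≤ u} →
      P {ω | V ω < r ∧ U ω ≤ u} / P {ω | U ω ≤ u}
        ≤ P {ω | V ω < r ∧ U ω ≤ u'} / P {ω | U ω ≤ u'})
    (c : ℝ) (hc : 0 < c) (q : ℝ) (hq0 : 0 < q) (hq1 : q < 1) :
    ∫⁻ ω, ENNReal.ofReal (if U ω ≤ c * V ω ∧ 0 < V ω then (V ω)⁻¹ else 0) ∂P
      ≤ ENNReal.ofReal (c / q) := by
  set s : ℤ → ℝ := fun k => q ^ k with hs_def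
  have hs : ∀ k, 0 < s k := fun k => zpow_pos hq0 k
  have hsmono : ∀ k, s (k + 1) < s k := by
    intro k
    exact zpow_lt_zpow_right_of_lt_one₀ hq0 hq1 (by omega)
  -- the sets
  set A : ℤ → Set Ω := fun k =>
    {ω | U ω ≤ c * V ω ∧ s (k + 1) ≤ c * V ω ∧ c * V ω < s k} with hA_def
  have hA_meas : ∀ k, MeasurableSet (A k) := by
    intro k
    exact (measurableSet_le hU (hV.const_mul c)).inter
      ((measurableSet_le measurable_const (hV.const_mul c)).inter
        (measurableSet_lt (hV.const_mul c) measurable_const))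
  set B : ℤ → Set Ω := fun k => {ω | V ω < s (k + 1) / c ∧ U ω ≤ s k} with hB_def
  have hB_meas : ∀ k, MeasurableSet (B k) :=
    fun k => (measurableSet_lt hV measurable_const).inter (measurableSet_le hU measurable_const)
  set F : ℤ → ℝ≥0∞ := fun k => P {ω | U ω ≤ s k} with hF_def
  set N : ℤ → ℝ≥0∞ := fun k => P {ω | V ω < s k / c ∧ U ω ≤ s k} with hN_def
  have hF1 : ∀ k, F k ≤ 1 := fun k => prob_le_one
  have hNF : ∀ k, N k ≤ F k := by
    intro k; exact measure_mono (fun ω hω => hω.2)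
  set b : ℤ → ℝ≥0∞ := fun k => N k / F k with hb_def
  have hb1 : ∀ k, b k ≤ 1 :=
    fun k => (ENNReal.div_le_div_right (hNF k) _).trans ENNReal.div_self_le_one
  have hbne : ∀ k, b k ≠ ⊤ := fun k => ((hb1 k).trans_lt ENNReal.one_lt_top).ne
  set β : ℤ → ℝ := fun k => (b k).toReal with hβ_def
  have hofβ : ∀ k, ENNReal.ofReal (β k) = b k := fun k => ENNReal.ofReal_toReal (hbne k)
  have hβ0 : ∀ k, 0 ≤ β k := fun k => ENNReal.toReal_nonneg
  have hβ1 : ∀ k, β k ≤ 1 := by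
    intro k
    have := ENNReal.toReal_mono (by simp) (hb1 k)
    simpa using this
  -- dependence step
  have hstep : ∀ k, b (k + 1) ≤ P (B k) / F k := by
    intro k
    rcases eq_or_lt_of_le (show (0:ℝ≥0∞) ≤ F (k + 1) from zero_le) with hF0 | hFpos
    · have hN0 : N (k + 1) = 0 := le_antisymm (hF0 ▸ hNF (k + 1)) zero_le
      simp [hb_def, hN0]
    · have h := hdep (s (k + 1) / c) (le_of_lt (div_pos (hs _) hc)) (s (k + 1)) (s k)
        (hsmono k).le hFpos
      exact h
  have hbmono : ∀ k, b (k + 1) ≤ b k := by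
    intro k
    refine (hstep k).trans (ENNReal.div_le_div_right (measure_mono ?_) _)
    intro ω hω
    have hdiv : s (k + 1) / c ≤ s k / c := by gcongr; exact (hsmono k).le
    exact ⟨hω.1.trans_le hdiv, hω.2⟩
  have hβmono : ∀ k, β (k + 1) ≤ β k := fun k => ENNReal.toReal_mono (hbne k) (hbmono k)
  -- disjoint union bound
  have key1 : ∀ k, P (A k) + P (B k) ≤ N k := by
    intro k
    have hdisj : Disjoint (A k) (B k) := by
      rw [Set.disjoint_left]
      rintro ω ⟨-, h1, -⟩ ⟨h2, -⟩
      have : c * V ω < s (k + 1) := by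
        have := (lt_div_iff₀' hc).1 h2
        linarith
      linarith
    rw [← measure_union hdisj (hB_meas k)]
    apply measure_mono
    rintro ω (⟨h1, h2, h3⟩ | ⟨h1, h2⟩)
    · exact ⟨(lt_div_iff₀' hc).2 h3, le_of_lt (h1.trans_lt h3)⟩
    · exact ⟨h1.trans_le (by gcongr; exact (hsmono k).le), h2⟩
  have key2 : ∀ k, F k * b (k + 1) ≤ P (B k) := by
    intro k
    calc F k * b (k + 1) ≤ F k * (P (B k) / F k) := by gcongr; exact hstep k
      _ ≤ P (B k) := ENNReal.mul_div_le
  have key3 : ∀ k, N k = F k * b k := by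
    intro k
    rcases eq_or_ne (F k) 0 with hF0 | hF0
    · have : N k = 0 := le_antisymm (hF0 ▸ hNF k) zero_le
      simp [this, hF0]
    · rw [hb_def]
      rw [ENNReal.mul_div_cancel hF0 ((hF1 k).trans_lt ENNReal.one_lt_top).ne]
  have key4 : ∀ k, P (A k) ≤ F k * ENNReal.ofReal (β k - β (k + 1)) := by
    intro k
    have hsub : ENNReal.ofReal (β k - β (k + 1)) + b (k + 1) = b k := by
      rw [ENNReal.ofReal_sub _ (hβ0 (k + 1)), hofβ, hofβ]
      exact tsub_add_cancel_of_le (hbmono k)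
    have h1 : P (A k) + F k * b (k + 1) ≤ F k * b k := by
      calc P (A k) + F k * b (k + 1) ≤ P (A k) + P (B k) := by gcongr; exact key2 k
        _ ≤ N k := key1 k
        _ = F k * b k := key3 k
    have h2 : F k * b k = F k * ENNReal.ofReal (β k - β (k + 1)) + F k * b (k + 1) := by
      rw [← mul_add, hsub]
    rw [h2] at h1
    exact ENNReal.le_of_add_le_add_right
      (((mul_le_mul' (hF1 k) (hb1 (k + 1))).trans_lt (by norm_num)).ne) h1
  have key5 : ∀ k, ENNReal.ofReal (c / s (k + 1)) * F k ≤ ENNReal.ofReal (c / q) := by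
    intro k
    rcases le_or_gt 0 k with hk | hk
    · have hsk1 : s k ≤ 1 := by
        obtain ⟨n, rfl⟩ := Int.eq_ofNat_of_zero_le hk
        simpa [hs_def, zpow_natCast] using pow_le_one₀ hq0.le hq1.le
      have hFle : F k ≤ ENNReal.ofReal (s k) := hUnif (s k) ⟨(hs k).le, hsk1⟩
      calc ENNReal.ofReal (c / s (k + 1)) * F k
          ≤ ENNReal.ofReal (c / s (k + 1)) * ENNReal.ofReal (s k) := by gcongr
        _ = ENNReal.ofReal (c / s (k + 1) * s k) := by
            rw [← ENNReal.ofReal_mul (by positivity)]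
        _ = ENNReal.ofReal (c / q) := by
            congr 1
            have h1 : s (k + 1) = q ^ k * q := by
              simp only [hs_def]; rw [zpow_add_one₀ hq0.ne']
            rw [h1]
            field_simp [hs_def]
            ring
    · have hq_le : q ≤ s (k + 1) := by
        have hk1 : (k + 1 : ℤ) ≤ 0 := by omega
        have h1 : (1:ℝ) ≤ s (k + 1) := by
          simp only [hs_def]
          exact one_le_zpow_of_nonpos₀ hq0 hq1.le hk1
        linarith
      calc ENNReal.ofReal (c / s (k + 1)) * F k
          ≤ ENNReal.ofReal (c / s (k + 1)) * 1 := by gcongr; exact hF1 k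
        _ = ENNReal.ofReal (c / s (k + 1)) := mul_one _
        _ ≤ ENNReal.ofReal (c / q) := by
            apply ENNReal.ofReal_le_ofReal
            gcongr
  -- pointwise bound
  have hpt : ∀ ω, ENNReal.ofReal (if U ω ≤ c * V ω ∧ 0 < V ω then (V ω)⁻¹ else 0)
      ≤ ∑' k : ℤ, (A k).indicator (fun _ => ENNReal.ofReal (c / s (k + 1))) ω := by
    intro ω
    by_cases h : U ω ≤ c * V ω ∧ 0 < V ω
    · rw [if_pos h]
      have hW : 0 < c * V ω := mul_pos hc h.2
      set x := Real.logb q (c * V ω) with hx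
      set k : ℤ := ⌈x⌉ - 1 with hk
      have hk1 : k + 1 = ⌈x⌉ := by omega
      have hrw : c * V ω = q ^ x := (Real.rpow_logb hq0 hq1.ne hW).symm
      have h1 : s (k + 1) ≤ c * V ω := by
        calc s (k + 1) = q ^ ((⌈x⌉ : ℤ)) := by rw [hk1]
          _ = q ^ ((⌈x⌉ : ℝ)) := (Real.rpow_intCast q _).symm
          _ ≤ q ^ x := Real.rpow_le_rpow_of_exponent_ge hq0 hq1.le (Int.le_ceil x)
          _ = c * V ω := hrw.symm
      have h2 : c * V ω < s k := by
        have hlt : ((k : ℝ)) < x := by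
          rw [hk]; push_cast
          linarith [Int.ceil_lt_add_one x]
        calc c * V ω = q ^ x := hrw
          _ < q ^ ((k : ℝ)) := Real.rpow_lt_rpow_of_exponent_gt hq0 hq1 hlt
          _ = s k := Real.rpow_intCast q k
      have hmem : ω ∈ A k := ⟨h.1, h1, h2⟩
      have hval : (A k).indicator (fun _ => ENNReal.ofReal (c / s (k + 1))) ω
          = ENNReal.ofReal (c / s (k + 1)) := Set.indicator_of_mem hmem _
      have hle : (V ω)⁻¹ ≤ c / s (k + 1) := by
        rw [show (V ω)⁻¹ = c / (c * V ω) by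
          rw [eq_div_iff hW.ne', inv_mul_eq_div, mul_div_assoc, div_self h.2.ne', mul_one]]
        gcongr
      calc ENNReal.ofReal ((V ω)⁻¹) ≤ ENNReal.ofReal (c / s (k + 1)) :=
            ENNReal.ofReal_le_ofReal hle
        _ = (A k).indicator (fun _ => ENNReal.ofReal (c / s (k + 1))) ω := hval.symm
        _ ≤ _ := ENNReal.le_tsum k
    · rw [if_neg h]; simp
  -- put everything together
  calc ∫⁻ ω, ENNReal.ofReal (if U ω ≤ c * V ω ∧ 0 < V ω then (V ω)⁻¹ else 0) ∂P
      ≤ ∫⁻ ω, ∑' k : ℤ, (A k).indicator (fun _ => ENNReal.ofReal (c / s (k + 1))) ω ∂P :=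
        lintegral_mono hpt
    _ = ∑' k : ℤ, ∫⁻ ω, (A k).indicator (fun _ => ENNReal.ofReal (c / s (k + 1))) ω ∂P :=
        lintegral_tsum (fun k => ((measurable_const.indicator (hA_meas k)).aemeasurable))
    _ = ∑' k : ℤ, ENNReal.ofReal (c / s (k + 1)) * P (A k) := by
        congr 1; funext k; exact lintegral_indicator_const (hA_meas k) _
    _ ≤ ∑' k : ℤ, ENNReal.ofReal (c / q) * ENNReal.ofReal (β k - β (k + 1)) := by
        apply ENNReal.tsum_le_tsum
        intro k
        calc ENNReal.ofReal (c / s (k + 1)) * P (A k)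
            ≤ ENNReal.ofReal (c / s (k + 1)) * (F k * ENNReal.ofReal (β k - β (k + 1))) := by
              gcongr; exact key4 k
          _ = (ENNReal.ofReal (c / s (k + 1)) * F k) * ENNReal.ofReal (β k - β (k + 1)) := by
              ring
          _ ≤ ENNReal.ofReal (c / q) * ENNReal.ofReal (β k - β (k + 1)) := by
              gcongr; exact key5 k
    _ = ENNReal.ofReal (c / q) * ∑' k : ℤ, ENNReal.ofReal (β k - β (k + 1)) :=
        ENNReal.tsum_mul_left
    _ ≤ ENNReal.ofReal (c / q) * 1 := by
        gcongr; exact tele_sum_le_one β hβmono hβ0 hβ1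
    _ = ENNReal.ofReal (c / q) := mul_one _

/-- Dependence control condition with the linear shape function `β(x) = x`, under the
positive dependence condition that `u ↦ P(V < r | U ≤ u)` is nondecreasing for each `r ≥ 0`. -/
theorem dependence_control_linear
    {Ω : Type*} [MeasurableSpace Ω] (P : Measure Ω) [IsProbabilityMeasure P]
    (U V : Ω → ℝ) (hU : Measurable U) (hV : Measurable V)
    (hUpos : ∀ ω, 0 ≤ U ω) (hVpos : ∀ ω, 0 ≤ V ω)
    (hUnif : ∀ t : ℝ, t ∈ Set.Icc (0:ℝ) 1 → P {ω | U ω ≤ t} ≤ ENNReal.ofReal t)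
    (hdep : ∀ r : ℝ, 0 ≤ r → ∀ u u' : ℝ, u ≤ u' → 0 < P {ω | U ω ≤ u} →
      P {ω | V ω < r ∧ U ω ≤ u} / P {ω | U ω ≤ u}
        ≤ P {ω | V ω < r ∧ U ω ≤ u'} / P {ω | U ω ≤ u'}) :
    ∀ c : ℝ, 0 < c →
      ∫ ω, (if U ω ≤ c * V ω ∧ 0 < V ω then (V ω)⁻¹ else 0) ∂P ≤ c := by
  intro c hc
  have hmeas : Measurable (fun ω => if U ω ≤ c * V ω ∧ 0 < V ω then (V ω)⁻¹ else 0) :=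
    Measurable.ite
      ((measurableSet_le hU (hV.const_mul c)).inter (measurableSet_lt measurable_const hV))
      hV.inv measurable_const
  have hnn : 0 ≤ᵐ[P] fun ω => if U ω ≤ c * V ω ∧ 0 < V ω then (V ω)⁻¹ else 0 := by
    apply Filter.Eventually.of_forall
    intro ω
    by_cases h : U ω ≤ c * V ω ∧ 0 < V ω
    · simp only [Pi.zero_apply, if_pos h]
      exact inv_nonneg.2 h.2.le
    · simp [h]
  rw [integral_eq_lintegral_of_nonneg_ae hnn hmeas.aestronglyMeasurable]
  apply ENNReal.toReal_le_of_le_ofReal hc.le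
  apply ENNReal.le_of_forall_pos_le_add
  intro ε hε _
  have hεR : (0:ℝ) < (ε:ℝ) := hε
  set q : ℝ := c / (c + ε) with hq
  have hq0 : 0 < q := div_pos hc (by linarith)
  have hq1 : q < 1 := (div_lt_one (by linarith)).2 (by linarith)
  have hkey := key_bound P U V hU hV hUnif hdep c hc q hq0 hq1
  have hcq : c / q = c + ε := by
    rw [hq]; field_simp
  rw [hcq] at hkey
  calc ∫⁻ ω, ENNReal.ofReal (if U ω ≤ c * V ω ∧ 0 < V ω then (V ω)⁻¹ else 0) ∂P
      ≤ ENNReal.ofReal (c + ε) := hkey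
    _ = ENNReal.ofReal c + ENNReal.ofReal (ε:ℝ) := ENNReal.ofReal_add hc.le hεR.le
    _ = ENNReal.ofReal c + ε := by rw [ENNReal.ofReal_coe_nnreal]
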